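/- Let H be a finite-dimensional real inner product space and A, B : H →L[ℝ] H be continuous linear maps. If for every y ∈ H, (⟨B (exp(tA) y), exp(tA) y⟩ = 0 for all t ≥ 0) implies y = 0, then there exist T > 0 and δ > 0 such that for all y ∈ H, ∫₀ᵀ |⟨B (exp(tA) y), exp(tA) y⟩| dt ≥ δ ‖y‖². -/

import Mathlib

set_option maxHeartbeats 1000000


open scoped RealInnerProductSpace
open MeasureTheory

private lemma aux_obs_estimate {H : Type*} [NormedAddCommGroup H] [InnerProductSpace ℝ H]
    [FiniteDimensional ℝ H] (f : H → ℝ → ℝ)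
    (hcont : Continuous (Function.uncurry f))
    (hquad : ∀ (c : ℝ) (y : H) (t : ℝ), f (c • y) t = c ^ 2 * f y t)
    (hobs : ∀ y : H, (∀ t : ℝ, 0 ≤ t → f y t = 0) → y = 0) :
    ∃ T > (0 : ℝ), ∃ δ > (0 : ℝ), ∀ y : H,
      δ * ‖y‖ ^ 2 ≤ ∫ t in (0 : ℝ)..T, |f y t| := by
  have hconty : ∀ y : H, Continuous fun t => |f y t| := fun y =>
    ((hcont.comp (Continuous.prodMk_right y)).abs)
  -- for each unit vector, some integral over [0, n] is positive
  have key : ∀ y : H, ‖y‖ = 1 → ∃ n : ℕ, 0 < ∫ t in (0:ℝ)..(n:ℝ), |f y t| := by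
    intro y hy
    have hy0 : y ≠ 0 := by intro h; rw [h] at hy; simp at hy
    obtain ⟨t₀, ht₀, hft₀⟩ : ∃ t : ℝ, 0 ≤ t ∧ f y t ≠ 0 := by
      by_contra h
      push_neg at h
      exact hy0 (hobs y h)
    obtain ⟨n, hn⟩ := exists_nat_gt t₀
    refine ⟨n, ?_⟩
    have h0n : (0:ℝ) ≤ n := le_trans ht₀ hn.le
    rw [intervalIntegral.integral_of_le h0n]
    rw [setIntegral_pos_iff_support_of_nonneg_ae
      (Filter.Eventually.of_forall (fun t => abs_nonneg _))
      ((hconty y).integrableOn_Ioc)]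
    -- the support contains a nonempty open subset of Ioc 0 n
    have hopen : IsOpen {t : ℝ | f y t ≠ 0} :=
      isOpen_ne_fun (hcont.comp (Continuous.prodMk_right y)) continuous_const
    obtain ⟨ε, hε, hball⟩ := Metric.isOpen_iff.1 hopen t₀ hft₀
    have hmin : 0 < min ε (n - t₀) := lt_min hε (by linarith)
    set s := t₀ + min ε (n - t₀) / 2 with hs
    have hsball : s ∈ Metric.ball t₀ ε := by
      rw [Metric.mem_ball, Real.dist_eq, hs, add_sub_cancel_left,
        abs_of_nonneg (by linarith : (0:ℝ) ≤ min ε (n - t₀) / 2)]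
      have := min_le_left ε (n - t₀)
      linarith
    have hsIoo : s ∈ Set.Ioo t₀ (n:ℝ) := by
      constructor
      · rw [hs]; linarith
      · rw [hs]; have := min_le_right ε (n - t₀); linarith
    have hsub : Metric.ball t₀ ε ∩ Set.Ioo t₀ (n:ℝ) ⊆
        Function.support (fun t => |f y t|) ∩ Set.Ioc 0 (n:ℝ) := by
      rintro x ⟨hx1, hx2⟩
      refine ⟨?_, lt_of_le_of_lt ht₀ hx2.1, hx2.2.le⟩
      simp only [Function.mem_support, ne_eq, abs_eq_zero]
      exact hball hx1
    refine lt_of_lt_of_le ?_ (measure_mono hsub)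
    exact (Metric.isOpen_ball.inter isOpen_Ioo).measure_pos volume ⟨s, hsball, hsIoo⟩
  -- continuity of the parametric integrals
  have hg : ∀ n : ℕ, Continuous fun y : H => ∫ t in (0:ℝ)..(n:ℝ), |f y t| := by
    intro n
    exact intervalIntegral.continuous_parametric_intervalIntegral_of_continuous'
      (f := fun y t => |f y t|) hcont.abs 0 (n:ℝ)
  -- compactness argument on the sphere
  have hcover : Metric.sphere (0:H) 1 ⊆
      ⋃ n : ℕ, {y : H | 0 < ∫ t in (0:ℝ)..(n:ℝ), |f y t|} := by
    intro y hy
    obtain ⟨n, hn⟩ := key y (by simpa using hy)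
    exact Set.mem_iUnion.2 ⟨n, hn⟩
  obtain ⟨s, hs⟩ := (isCompact_sphere (0:H) 1).elim_finite_subcover
    (fun n : ℕ => {y : H | 0 < ∫ t in (0:ℝ)..(n:ℝ), |f y t|})
    (fun n => isOpen_lt continuous_const (hg n)) hcover
  set N : ℕ := s.sup id + 1 with hN
  have hTpos : (0:ℝ) < (N:ℝ) := by positivity
  -- everything in the sphere has positive integral over [0, N]
  have hposN : ∀ y ∈ Metric.sphere (0:H) 1, 0 < ∫ t in (0:ℝ)..(N:ℝ), |f y t| := by
    intro y hy
    obtain ⟨n, hns, hn⟩ := Set.mem_iUnion₂.1 (hs hy)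
    have hnN : (n:ℝ) ≤ (N:ℝ) := by
      have : n ≤ N := le_trans (Finset.le_sup (f := id) hns) (Nat.le_succ _)
      exact_mod_cast this
    refine lt_of_lt_of_le hn ?_
    exact intervalIntegral.integral_mono_interval le_rfl (by exact_mod_cast n.cast_nonneg) hnN
      (Filter.Eventually.of_forall (fun t => abs_nonneg _))
      ((hconty y).intervalIntegrable _ _)
  rcases subsingleton_or_nontrivial H with hsub | hnt
  · refine ⟨1, one_pos, 1, one_pos, fun y => ?_⟩
    have hy : y = 0 := Subsingleton.elim y 0
    have hfz : ∀ t : ℝ, f y t = 0 := by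
      intro t
      have := hquad 0 y t
      simpa [hy] using this
    rw [hy]
    simp only [norm_zero, ne_eq, OfNat.ofNat_ne_zero, not_false_eq_true, zero_pow, mul_zero]
    exact intervalIntegral.integral_nonneg zero_le_one (fun t _ => abs_nonneg _)
  · -- extreme value theorem on the sphere
    obtain ⟨w, hw⟩ := exists_ne (0 : H)
    have hwpos : (0:ℝ) < ‖w‖ := norm_pos_iff.2 hw
    have hx₀ : ‖w‖⁻¹ • w ∈ Metric.sphere (0:H) 1 := by
      simp [mem_sphere_zero_iff_norm, norm_smul, abs_of_pos (inv_pos.2 hwpos),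
        inv_mul_cancel₀ hwpos.ne']
    obtain ⟨z, hz, hzmin⟩ := (isCompact_sphere (0:H) 1).exists_isMinOn ⟨_, hx₀⟩
      (hg N).continuousOn
    refine ⟨(N:ℝ), hTpos, _, hposN z hz, fun y => ?_⟩
    rcases eq_or_ne y 0 with rfl | hy0
    · have hfz : ∀ t : ℝ, f (0:H) t = 0 := by
        intro t
        have := hquad 0 0 t
        simpa using this
      simp only [norm_zero, ne_eq, OfNat.ofNat_ne_zero, not_false_eq_true, zero_pow, mul_zero]
      exact intervalIntegral.integral_nonneg (by positivity) (fun t _ => abs_nonneg _)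
    · set u : H := ‖y‖⁻¹ • y with hu
      have hny : (0:ℝ) < ‖y‖ := norm_pos_iff.2 hy0
      have hunorm : u ∈ Metric.sphere (0:H) 1 := by
        simp [hu, norm_smul, abs_of_pos (inv_pos.2 hny), inv_mul_cancel₀ hny.ne']
      have hyu : y = ‖y‖ • u := by
        rw [hu, smul_smul, mul_inv_cancel₀ hny.ne', one_smul]
      have hsplit : (∫ t in (0:ℝ)..(N:ℝ), |f y t|)
          = ‖y‖ ^ 2 * ∫ t in (0:ℝ)..(N:ℝ), |f u t| := by
        rw [← intervalIntegral.integral_const_mul]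
        apply intervalIntegral.integral_congr
        intro t _
        simp only
        have h1 : f y t = ‖y‖ ^ 2 * f u t := by
          have h2 : f (‖y‖ • u) t = ‖y‖ ^ 2 * f u t := hquad _ _ _
          rwa [← hyu] at h2
        rw [h1, abs_mul, abs_of_nonneg (by positivity)]
      calc (∫ t in (0:ℝ)..(N:ℝ), |f z t|) * ‖y‖ ^ 2
          ≤ (∫ t in (0:ℝ)..(N:ℝ), |f u t|) * ‖y‖ ^ 2 :=
            mul_le_mul_of_nonneg_right (hzmin hunorm) (by positivity)
        _ = ∫ t in (0:ℝ)..(N:ℝ), |f y t| := by rw [hsplit]; ring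

theorem stmt_1 {H : Type*} [NormedAddCommGroup H] [InnerProductSpace ℝ H]
    [FiniteDimensional ℝ H] (A B : H →L[ℝ] H)
    (hobs : ∀ y : H,
      (∀ t : ℝ, 0 ≤ t → ⟪B ((NormedSpace.exp (t • A)) y), (NormedSpace.exp (t • A)) y⟫ = 0) →
      y = 0) :
    ∃ T > (0 : ℝ), ∃ δ > (0 : ℝ), ∀ y : H,
      δ * ‖y‖ ^ 2 ≤
        ∫ t in (0 : ℝ)..T, |⟪B ((NormedSpace.exp (t • A)) y), (NormedSpace.exp (t • A)) y⟫| := by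
  have hexp : Continuous fun t : ℝ => NormedSpace.exp (t • A) :=
    (continuous_iff_continuousAt.2 fun x => (NormedSpace.exp_analytic (𝕂 := ℝ) x).continuousAt).comp
      (continuous_id.smul continuous_const)
  have happ : Continuous fun p : H × ℝ => (NormedSpace.exp (p.2 • A)) p.1 :=
    (hexp.comp continuous_snd).clm_apply continuous_fst
  have hcont : Continuous (Function.uncurry
      (fun (y : H) (t : ℝ) => ⟪B ((NormedSpace.exp (t • A)) y), (NormedSpace.exp (t • A)) y⟫)) := by
    have hB : Continuous fun p : H × ℝ => B ((NormedSpace.exp (p.2 • A)) p.1) :=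
      B.continuous.comp happ
    exact hB.inner happ
  have hquad : ∀ (c : ℝ) (y : H) (t : ℝ),
      ⟪B ((NormedSpace.exp (t • A)) (c • y)), (NormedSpace.exp (t • A)) (c • y)⟫
        = c ^ 2 * ⟪B ((NormedSpace.exp (t • A)) y), (NormedSpace.exp (t • A)) y⟫ := by
    intro c y t
    rw [ContinuousLinearMap.map_smul, ContinuousLinearMap.map_smul,
      real_inner_smul_left, real_inner_smul_right]
    ring
  exact aux_obs_estimate
    (fun y t => ⟪B ((NormedSpace.exp (t • A)) y), (NormedSpace.exp (t • A)) y⟫)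
    hcont hquad hobs
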